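/- Let A be a finite linear hyperplane arrangement and let C, C₁, C₂ be chambers with C₁ ≤ C₂ in the poset of regions P_C(A). Then the interval [C₁, C₂] in P_C(A) is isomorphic as a poset to the lower interval (P_{C₁}(A))_{≤ C₂} in the poset of regions with base chamber C₁. -/

import Mathlib

open scoped Classical
noncomputable section

/-- Ambient real vector space `ℝ^d`. -/
abbrev EucV (d : ℕ) := Fin d → ℝ

/-- The complement of the arrangement given by the kernels of the linear forms in `A`. -/
def hypCompl {d : ℕ} (A : Finset (EucV d →ₗ[ℝ] ℝ)) : Set (EucV d) :=
  {x | ∀ f ∈ A, f x ≠ 0}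

/-- A chamber of the arrangement: a connected component of the complement. -/
def IsChamber {d : ℕ} (A : Finset (EucV d →ₗ[ℝ] ℝ)) (C : Set (EucV d)) : Prop :=
  ∃ x ∈ hypCompl A, C = connectedComponentIn (hypCompl A) x

/-- The hyperplane `ker f` separates `C` from `C'`. -/
def SepBy {d : ℕ} (f : EucV d →ₗ[ℝ] ℝ) (C C' : Set (EucV d)) : Prop :=
  ∃ x ∈ C, ∃ y ∈ C', f x * f y < 0

/-- The set `S(C,C')` of hyperplanes of `A` separating `C` from `C'`. -/
def sepSet {d : ℕ} (A : Finset (EucV d →ₗ[ℝ] ℝ)) (C C' : Set (EucV d)) :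
    Set (EucV d →ₗ[ℝ] ℝ) :=
  {f | f ∈ A ∧ SepBy f C C'}

lemma chamber_mem {d : ℕ} {A : Finset (EucV d →ₗ[ℝ] ℝ)} {D : Set (EucV d)}
    (hD : IsChamber A D) : ∃ x, x ∈ D := by
  obtain ⟨p, hp, rfl⟩ := hD
  exact ⟨p, mem_connectedComponentIn hp⟩

lemma chamber_subset {d : ℕ} {A : Finset (EucV d →ₗ[ℝ] ℝ)} {D : Set (EucV d)}
    (hD : IsChamber A D) : D ⊆ hypCompl A := by
  obtain ⟨p, hp, rfl⟩ := hD
  exact connectedComponentIn_subset _ _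

/-- On a chamber, a linear form of the arrangement has constant sign. -/
lemma sign_const {d : ℕ} {A : Finset (EucV d →ₗ[ℝ] ℝ)} {f : EucV d →ₗ[ℝ] ℝ}
    (hf : f ∈ A) {D : Set (EucV d)} (hD : IsChamber A D) {x y : EucV d}
    (hx : x ∈ D) (hy : y ∈ D) : 0 < f x * f y := by
  obtain ⟨p, hp, rfl⟩ := hD
  set D := connectedComponentIn (hypCompl A) p with hDdef
  have hsub : D ⊆ hypCompl A := connectedComponentIn_subset _ _
  have hfx : f x ≠ 0 := hsub hx f hf
  have hfy : f y ≠ 0 := hsub hy f hf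
  by_contra h
  push_neg at h
  have hlt : f x * f y < 0 := lt_of_le_of_ne h (mul_ne_zero hfx hfy)
  have hconn : IsPreconnected D := (isPreconnected_connectedComponentIn)
  have hcont : ContinuousOn f D := f.continuous_of_finiteDimensional.continuousOn
  rcases mul_neg_iff.mp hlt with ⟨h1, h2⟩ | ⟨h1, h2⟩
  · obtain ⟨z, hz, hz0⟩ := hconn.intermediate_value hy hx hcont
      (Set.mem_Icc.mpr ⟨le_of_lt h2, le_of_lt h1⟩)
    exact hsub hz f hf hz0
  · obtain ⟨z, hz, hz0⟩ := hconn.intermediate_value hx hy hcont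
      (Set.mem_Icc.mpr ⟨le_of_lt h1, le_of_lt h2⟩)
    exact hsub hz f hf hz0

lemma sepBy_iff {d : ℕ} {A : Finset (EucV d →ₗ[ℝ] ℝ)} {f : EucV d →ₗ[ℝ] ℝ}
    (hf : f ∈ A) {D E : Set (EucV d)} (hD : IsChamber A D) (hE : IsChamber A E)
    {x y : EucV d} (hx : x ∈ D) (hy : y ∈ E) :
    SepBy f D E ↔ f x * f y < 0 := by
  constructor
  · rintro ⟨a, ha, b, hb, hab⟩
    have h1 := sign_const hf hD hx ha
    have h2 := sign_const hf hE hy hb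
    nlinarith
  · intro h
    exact ⟨x, hx, y, hy, h⟩

lemma sign_xor {a b c : ℝ} (ha : a ≠ 0) (hb : b ≠ 0) (hc : c ≠ 0) :
    a * c < 0 ↔ Xor' (a * b < 0) (b * c < 0) := by
  rcases ha.lt_or_gt with h1 | h1 <;> rcases hb.lt_or_gt with h2 | h2 <;>
    rcases hc.lt_or_gt with h3 | h3 <;>
    simp only [Xor', xor_def] <;>
    constructor <;> intro h <;> first
      | nlinarith
      | (left; constructor <;> nlinarith)
      | (right; constructor <;> nlinarith)
      | (rcases h with ⟨h4, h5⟩ | ⟨h4, h5⟩ <;> nlinarith)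

lemma sep_xor {d : ℕ} {A : Finset (EucV d →ₗ[ℝ] ℝ)} {f : EucV d →ₗ[ℝ] ℝ}
    (hf : f ∈ A) {P Q R : Set (EucV d)} (hP : IsChamber A P) (hQ : IsChamber A Q)
    (hR : IsChamber A R) :
    SepBy f P R ↔ Xor' (SepBy f P Q) (SepBy f Q R) := by
  obtain ⟨p, hp⟩ := chamber_mem hP
  obtain ⟨q, hq⟩ := chamber_mem hQ
  obtain ⟨r, hr⟩ := chamber_mem hR
  rw [sepBy_iff hf hP hR hp hr, sepBy_iff hf hP hQ hp hq, sepBy_iff hf hQ hR hq hr]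
  exact sign_xor (chamber_subset hP hp f hf) (chamber_subset hQ hq f hf)
    (chamber_subset hR hr f hf)

/-- The interval `[C₁, C₂]` in the poset of regions `P_C(A)` is isomorphic as a poset to
the lower interval `(P_{C₁}(A))_{≤ C₂}` in the poset of regions with base chamber `C₁`. -/
theorem interval_iso {d : ℕ} (A : Finset (EucV d →ₗ[ℝ] ℝ))
    (hA : ∀ f ∈ A, f ≠ 0) (C C₁ C₂ : Set (EucV d))
    (hC : IsChamber A C) (hC₁ : IsChamber A C₁) (hC₂ : IsChamber A C₂)
    (h12 : sepSet A C C₁ ⊆ sepSet A C C₂) :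
    ∃ e : {D : Set (EucV d) // IsChamber A D ∧ sepSet A C C₁ ⊆ sepSet A C D ∧
            sepSet A C D ⊆ sepSet A C C₂} ≃
          {D : Set (EucV d) // IsChamber A D ∧ sepSet A C₁ D ⊆ sepSet A C₁ C₂},
      ∀ X Y, sepSet A C X.1 ⊆ sepSet A C Y.1 ↔
        sepSet A C₁ (e X).1 ⊆ sepSet A C₁ (e Y).1 := by
  -- key xor identity relative to base chambers C and C₁
  have key : ∀ f ∈ A, ∀ D : Set (EucV d), IsChamber A D →
      (SepBy f C D ↔ Xor' (SepBy f C C₁) (SepBy f C₁ D)) :=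
    fun f hf D hD => sep_xor hf hC hC₁ hD
  have mem_sep : ∀ (P Q : Set (EucV d)) (f : EucV d →ₗ[ℝ] ℝ),
      f ∈ sepSet A P Q ↔ f ∈ A ∧ SepBy f P Q := fun _ _ _ => Iff.rfl
  -- forward direction of the interval characterization
  have fwd : ∀ D : Set (EucV d), IsChamber A D →
      sepSet A C C₁ ⊆ sepSet A C D → sepSet A C D ⊆ sepSet A C C₂ →
      sepSet A C₁ D ⊆ sepSet A C₁ C₂ := by
    intro D hD hl hr f hfmem
    obtain ⟨hf, hsep⟩ := hfmem
    have kD := key f hf D hD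
    have k2 := key f hf C₂ hC₂
    have hl' := fun h => (hl ⟨hf, h⟩).2
    have hr' := fun h => (hr ⟨hf, h⟩).2
    have h12' := fun h => (h12 ⟨hf, h⟩).2
    refine ⟨hf, ?_⟩
    simp only [Xor', xor_def] at kD k2
    tauto
  have bwd : ∀ D : Set (EucV d), IsChamber A D →
      sepSet A C₁ D ⊆ sepSet A C₁ C₂ →
      sepSet A C C₁ ⊆ sepSet A C D ∧ sepSet A C D ⊆ sepSet A C C₂ := by
    intro D hD hsub
    constructor
    · intro f hfmem
      obtain ⟨hf, hsep⟩ := hfmem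
      have kD := key f hf D hD
      have k2 := key f hf C₂ hC₂
      have hsub' := fun h => (hsub ⟨hf, h⟩).2
      have h12' := fun h => (h12 ⟨hf, h⟩).2
      refine ⟨hf, ?_⟩
      simp only [Xor', xor_def] at kD k2
      tauto
    · intro f hfmem
      obtain ⟨hf, hsep⟩ := hfmem
      have kD := key f hf D hD
      have k2 := key f hf C₂ hC₂
      have hsub' := fun h => (hsub ⟨hf, h⟩).2
      have h12' := fun h => (h12 ⟨hf, h⟩).2
      refine ⟨hf, ?_⟩
      simp only [Xor', xor_def] at kD k2
      tauto
  refine ⟨{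
    toFun := fun X => ⟨X.1, X.2.1, fwd X.1 X.2.1 X.2.2.1 X.2.2.2⟩
    invFun := fun X => ⟨X.1, X.2.1, (bwd X.1 X.2.1 X.2.2).1, (bwd X.1 X.2.1 X.2.2).2⟩
    left_inv := fun X => rfl
    right_inv := fun X => rfl }, ?_⟩
  intro X Y
  obtain ⟨Xv, hXc, hXl, hXr⟩ := X
  obtain ⟨Yv, hYc, hYl, hYr⟩ := Y
  simp only [Equiv.coe_fn_mk]
  constructor
  · intro h f hfmem
    obtain ⟨hf, hsep⟩ := hfmem
    have kX := key f hf Xv hXc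
    have kY := key f hf Yv hYc
    have h' := fun hh => (h ⟨hf, hh⟩).2
    have hXl' := fun hh => (hXl ⟨hf, hh⟩).2
    have hYl' := fun hh => (hYl ⟨hf, hh⟩).2
    refine ⟨hf, ?_⟩
    simp only [Xor', xor_def] at kX kY
    tauto
  · intro h f hfmem
    obtain ⟨hf, hsep⟩ := hfmem
    have kX := key f hf Xv hXc
    have kY := key f hf Yv hYc
    have h' := fun hh => (h ⟨hf, hh⟩).2
    have hXl' := fun hh => (hXl ⟨hf, hh⟩).2
    have hYl' := fun hh => (hYl ⟨hf, hh⟩).2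
    refine ⟨hf, ?_⟩
    simp only [Xor', xor_def] at kX kY
    tauto
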